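/- Let Ω ⊂ ℝ^d be a nonempty bounded open set with closure Ω̄, let 1 < r ≤ q, r' := r/(r-1), let m : Ω̄ → ℝ be continuous with m ≥ 0, and w ∈ L^q(Ω;ℝ^d). Then sup{ ∫_{Ω̄} m dα + ∫_Ω β·w dx : α a finite signed Borel measure on Ω̄, β ∈ L^{r'}(Ω;ℝ^d), such that ∫_{Ω̄} φ dα + (1/r') ∫_Ω φ |β|^{r'} dx ≤ 0 for every nonnegative continuous φ : Ω̄ → ℝ } = sup{ −(1/r') ∫_Ω m |β|^{r'} dx + ∫_Ω β·w dx : β ∈ L^{r'}(Ω;ℝ^d) }. -/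

import Mathlib

open MeasureTheory
open scoped RealInnerProductSpace ENNReal

/-- The integral of a function against a finite signed measure, via its Jordan
decomposition: `∫ φ dα := ∫ φ dα⁺ - ∫ φ dα⁻`. -/
noncomputable def signedIntegral {E : Type*} [MeasurableSpace E]
    (α : SignedMeasure E) (φ : E → ℝ) : ℝ :=
  (∫ x, φ x ∂α.toJordanDecomposition.posPart) -
    ∫ x, φ x ∂α.toJordanDecomposition.negPart

/-- For `Ω ⊂ ℝ^d` nonempty bounded open, `1 < r ≤ q`, `r' = r/(r-1)`, `m : Ω̄ → ℝ`
continuous nonnegative and `w ∈ L^q(Ω;ℝ^d)`: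
`sup { ∫_{Ω̄} m dα + ∫_Ω β·w dx : (α,β) with ∫ φ dα + (1/r')∫ φ|β|^{r'} ≤ 0 ∀ φ ≥ 0 }`
`= sup { -(1/r') ∫_Ω m |β|^{r'} dx + ∫_Ω β·w dx : β ∈ L^{r'}(Ω;ℝ^d) }`. -/
theorem stmt_10 (d : ℕ) (Ω : Set (EuclideanSpace ℝ (Fin d)))
    (hΩne : Ω.Nonempty) (hΩo : IsOpen Ω) (hΩb : Bornology.IsBounded Ω)
    (q r : ℝ) (hr : 1 < r) (hrq : r ≤ q)
    (m : EuclideanSpace ℝ (Fin d) → ℝ) (hm : Continuous m)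
    (hm0 : ∀ x ∈ closure Ω, 0 ≤ m x)
    (w : EuclideanSpace ℝ (Fin d) → EuclideanSpace ℝ (Fin d))
    (hw : MemLp w (ENNReal.ofReal q) (volume.restrict Ω)) :
    sSup {y : EReal | ∃ α : SignedMeasure (EuclideanSpace ℝ (Fin d)),
        ∃ β : EuclideanSpace ℝ (Fin d) → EuclideanSpace ℝ (Fin d),
        (∀ s : Set (EuclideanSpace ℝ (Fin d)),
          MeasurableSet s → Disjoint s (closure Ω) → α s = 0) ∧
        MemLp β (ENNReal.ofReal (r / (r - 1))) (volume.restrict Ω) ∧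
        (∀ φ : EuclideanSpace ℝ (Fin d) → ℝ, Continuous φ →
          (∀ x ∈ closure Ω, 0 ≤ φ x) →
          signedIntegral α φ +
            (1 / (r / (r - 1))) * ∫ x in Ω, φ x * ‖β x‖ ^ (r / (r - 1)) ≤ 0) ∧
        y = ((signedIntegral α m + ∫ x in Ω, ⟪β x, w x⟫ : ℝ) : EReal)} =
      sSup {y : EReal | ∃ β : EuclideanSpace ℝ (Fin d) → EuclideanSpace ℝ (Fin d),
        MemLp β (ENNReal.ofReal (r / (r - 1))) (volume.restrict Ω) ∧
        y = ((-(1 / (r / (r - 1))) * (∫ x in Ω, m x * ‖β x‖ ^ (r / (r - 1))) +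
          ∫ x in Ω, ⟪β x, w x⟫ : ℝ) : EReal)} := by
  have hr'1 : 1 < r / (r - 1) := by
    rw [lt_div_iff₀ (by linarith)]; linarith
  have hr'0 : (0 : ℝ) < r / (r - 1) := by linarith
  apply le_antisymm
  · refine sSup_le ?_
    rintro y ⟨α, β, hsupp, hβ, hcon, rfl⟩
    have h := hcon m hm hm0
    refine le_trans ?_ (le_sSup ⟨β, hβ, rfl⟩)
    have : signedIntegral α m + ∫ x in Ω, ⟪β x, w x⟫ ≤
        -(1 / (r / (r - 1))) * (∫ x in Ω, m x * ‖β x‖ ^ (r / (r - 1))) +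
          ∫ x in Ω, ⟪β x, w x⟫ := by linarith
    exact_mod_cast this
  · refine sSup_le ?_
    rintro y ⟨β, hβ, rfl⟩
    -- construct the signed measure α := -(1/r') (m ↦ ∫ ‖β‖^{r'})
    have hint : Integrable (fun x => ‖β x‖ ^ (r / (r - 1))) (volume.restrict Ω) := by
      have := hβ.integrable_norm_rpow
        (by simp [ENNReal.ofReal_eq_zero]; linarith) (by simp)
      simpa [ENNReal.toReal_ofReal hr'0.le] using this
    have hint2 : Integrable (fun x => (1 / (r / (r - 1))) * ‖β x‖ ^ (r / (r - 1)))
        (volume.restrict Ω) := hint.const_mul _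
    set f : EuclideanSpace ℝ (Fin d) → NNReal :=
      fun x => ((1 / (r / (r - 1))) * ‖β x‖ ^ (r / (r - 1))).toNNReal with hf
    have hfmeas : AEMeasurable f (volume.restrict Ω) := by
      apply AEMeasurable.real_toNNReal
      exact (hβ.1.norm.aemeasurable.pow aemeasurable_const).const_mul _
    set ν : Measure (EuclideanSpace ℝ (Fin d)) :=
      (volume.restrict Ω).withDensity (fun x => (f x : ℝ≥0∞)) with hν
    have hνfin : IsFiniteMeasure ν := by
      rw [hν]
      have : (fun x => (f x : ℝ≥0∞)) =
          fun x => ENNReal.ofReal ((1 / (r / (r - 1))) * ‖β x‖ ^ (r / (r - 1))) := by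
        funext x; simp [hf, ENNReal.ofReal]
      rw [this]
      exact isFiniteMeasure_withDensity_ofReal hint2.2
    have key : ∀ g : EuclideanSpace ℝ (Fin d) → ℝ,
        ∫ x, g x ∂ν = (1 / (r / (r - 1))) * ∫ x in Ω, g x * ‖β x‖ ^ (r / (r - 1)) := by
      intro g
      rw [hν, integral_withDensity_eq_integral_smul₀ hfmeas, ← integral_const_mul]
      apply integral_congr_ae
      filter_upwards with x
      have : ((f x : ℝ)) = (1 / (r / (r - 1))) * ‖β x‖ ^ (r / (r - 1)) := by
        rw [hf]; exact Real.coe_toNNReal _ (by positivity)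
      rw [NNReal.smul_def, smul_eq_mul, this]; ring
    set j : JordanDecomposition (EuclideanSpace ℝ (Fin d)) :=
      @JordanDecomposition.mk _ _ 0 ν inferInstance hνfin
        (MeasureTheory.Measure.MutuallySingular.zero_left) with hj
    set α : SignedMeasure (EuclideanSpace ℝ (Fin d)) := j.toSignedMeasure with hα
    have hjd : α.toJordanDecomposition = j :=
      j.toJordanDecomposition_toSignedMeasure
    have hsi : ∀ g : EuclideanSpace ℝ (Fin d) → ℝ,
        signedIntegral α g =
          -((1 / (r / (r - 1))) * ∫ x in Ω, g x * ‖β x‖ ^ (r / (r - 1))) := by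
      intro g
      rw [signedIntegral, hjd]
      show (∫ x, g x ∂(0 : Measure _)) - ∫ x, g x ∂ν = _
      rw [integral_zero_measure, key]; ring
    refine le_sSup ⟨α, β, ?_, hβ, ?_, ?_⟩
    · -- support
      intro s hs hdisj
      rw [hα]
      show (j.posPart.toSignedMeasure - j.negPart.toSignedMeasure) s = 0
      rw [MeasureTheory.Measure.toSignedMeasure_sub_apply hs]
      have : ν s = 0 := by
        rw [hν, withDensity_apply _ hs, Measure.restrict_restrict hs]
        have : s ∩ Ω = ∅ := by
          apply Set.eq_empty_of_subset_empty
          intro x hx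
          exact (hdisj.ne_of_mem hx.1 (subset_closure hx.2)) rfl
        rw [this]; simp
      show ((0 : Measure _) s).toReal - (ν s).toReal = 0
      simp [this]
    · -- constraint
      intro φ hφ hφ0
      rw [hsi φ]
      simp
    · -- value
      congr 2
      rw [hsi m]
      ring
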